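/- Let d, m be positive integers, H a d×m real matrix, R a symmetric positive definite d×d real matrix, Σ₀ a symmetric positive definite m×m real matrix, μ₀ ∈ ℝ^m, and ŷ = Hμ₀. Let W : ℝ^d → ℝ satisfy (i) W(y')² ≤ C₂ for all y' and (ii) W(y')² ‖y'‖₂ ≤ C₇ for all y', for finite constants C₂, C₇. For each y' ∈ ℝ^d define Σ(y') = (Σ₀⁻¹ + W(y')² Hᵀ R⁻¹ H)⁻¹ and μ(y') = μ₀ + W(y')² Σ(y') Hᵀ R⁻¹ (y' − ŷ), and fix y ∈ ℝ^d. Then there exists a constant C < ∞ such that for all y^c ∈ ℝ^d: (μ(y) − μ(y^c))ᵀ Σ(y^c)⁻¹ (μ(y) − μ(y^c)) ≤ C. -/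

import Mathlib

open Matrix

private lemma dotSelf_nonneg {n : ℕ} (x : Fin n → ℝ) : 0 ≤ x ⬝ᵥ x :=
  Finset.sum_nonneg fun _ _ => mul_self_nonneg _

private lemma dot_cauchy {n : ℕ} (x y : Fin n → ℝ) :
    x ⬝ᵥ y ≤ Real.sqrt (x ⬝ᵥ x) * Real.sqrt (y ⬝ᵥ y) := by
  have h := Finset.sum_mul_sq_le_sq_mul_sq Finset.univ x y
  have h2 : (x ⬝ᵥ y) ^ 2 ≤ (x ⬝ᵥ x) * (y ⬝ᵥ y) := by
    simpa [dotProduct, pow_two] using h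
  calc x ⬝ᵥ y ≤ |x ⬝ᵥ y| := le_abs_self _
    _ = Real.sqrt ((x ⬝ᵥ y) ^ 2) := (Real.sqrt_sq_eq_abs _).symm
    _ ≤ Real.sqrt ((x ⬝ᵥ x) * (y ⬝ᵥ y)) := Real.sqrt_le_sqrt h2
    _ = _ := Real.sqrt_mul (dotSelf_nonneg x) _

private lemma dot_sub_le {n : ℕ} (a b : Fin n → ℝ) :
    (a - b) ⬝ᵥ (a - b) ≤ (Real.sqrt (a ⬝ᵥ a) + Real.sqrt (b ⬝ᵥ b)) ^ 2 := by
  have hab : -(a ⬝ᵥ b) ≤ Real.sqrt (a ⬝ᵥ a) * Real.sqrt (b ⬝ᵥ b) := by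
    have := dot_cauchy a (-b)
    simpa using this
  have ha := Real.sq_sqrt (dotSelf_nonneg a)
  have hb := Real.sq_sqrt (dotSelf_nonneg b)
  have hcomm : b ⬝ᵥ a = a ⬝ᵥ b := dotProduct_comm b a
  have hexp : (a - b) ⬝ᵥ (a - b) = a ⬝ᵥ a - a ⬝ᵥ b - b ⬝ᵥ a + b ⬝ᵥ b := by
    simp [sub_dotProduct, dotProduct_sub]; ring
  nlinarith [hexp, hcomm, ha, hb]

private lemma frobenius_bound {d m : ℕ} (G : Matrix (Fin m) (Fin d) ℝ) (x : Fin d → ℝ) :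
    (G *ᵥ x) ⬝ᵥ (G *ᵥ x) ≤ (∑ i, ∑ j, G i j ^ 2) * (x ⬝ᵥ x) := by
  simp only [Matrix.mulVec, dotProduct]
  rw [Finset.sum_mul]
  refine Finset.sum_le_sum fun i _ => ?_
  have h := Finset.sum_mul_sq_le_sq_mul_sq Finset.univ (fun j => G i j) x
  calc (∑ j, G i j * x j) * (∑ j, G i j * x j) = (∑ j, G i j * x j) ^ 2 := (sq _).symm
    _ ≤ (∑ j, G i j ^ 2) * (∑ j, x j ^ 2) := h
    _ = (∑ j, G i j ^ 2) * (∑ j, x j * x j) := by simp [pow_two]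

private lemma psd_smul {n : ℕ} {M : Matrix (Fin n) (Fin n) ℝ} (hM : M.PosSemidef)
    {c : ℝ} (hc : 0 ≤ c) : (c • M).PosSemidef := by
  refine Matrix.PosSemidef.of_dotProduct_mulVec_nonneg ?_ ?_
  · show (c • M)ᴴ = c • M
    have h : (c • M)ᴴ = c • Mᴴ := by
      ext i j; simp [Matrix.conjTranspose_apply]
    rw [h, hM.1]
  · intro x
    rw [Matrix.smul_mulVec, dotProduct_smul]
    exact mul_nonneg hc (hM.dotProduct_mulVec_nonneg x)

private lemma posdef_lower {m : ℕ} (hm : 0 < m) (P : Matrix (Fin m) (Fin m) ℝ)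
    (hP : P.PosDef) : ∃ α : ℝ, 0 < α ∧ ∀ x : Fin m → ℝ, α * (x ⬝ᵥ x) ≤ x ⬝ᵥ P *ᵥ x := by
  have hstar : ∀ x : Fin m → ℝ, star x = x := fun x => funext fun i => rfl
  set f : (Fin m → ℝ) → ℝ := fun x => x ⬝ᵥ P *ᵥ x with hf
  have hcont : Continuous f := by
    simp only [hf, dotProduct, Matrix.mulVec]
    fun_prop
  set S : Set (Fin m → ℝ) := {x | x ⬝ᵥ x = 1} with hS
  have hclosed : IsClosed S := by
    have : Continuous (fun x : Fin m → ℝ => x ⬝ᵥ x) := by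
      simp only [dotProduct]; fun_prop
    exact isClosed_eq this continuous_const
  have hbdd : S ⊆ Metric.closedBall 0 1 := by
    intro x hx
    simp only [Metric.mem_closedBall, dist_zero_right]
    rw [pi_norm_le_iff_of_nonneg zero_le_one]
    intro i
    have h1 : x i * x i ≤ x ⬝ᵥ x :=
      Finset.single_le_sum (f := fun j => x j * x j) (fun j _ => mul_self_nonneg _)
        (Finset.mem_univ i)
    have hx1 : x ⬝ᵥ x = 1 := hx
    rw [Real.norm_eq_abs, abs_le_one_iff_mul_self_le_one]
    linarith
  have hScompact : IsCompact S :=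
    (isCompact_closedBall (0 : Fin m → ℝ) 1).of_isClosed_subset hclosed hbdd
  have hSne : S.Nonempty := by
    refine ⟨fun j => if j = ⟨0, hm⟩ then 1 else 0, ?_⟩
    simp [hS, dotProduct, ite_mul, mul_ite]
  obtain ⟨x₀, hx₀S, hmin'⟩ := hScompact.exists_isMinOn hSne hcont.continuousOn
  have hmin : ∀ z ∈ S, f x₀ ≤ f z := fun z hz => hmin' hz
  have hx₀ne : x₀ ≠ 0 := by
    intro h
    have : (x₀ : Fin m → ℝ) ⬝ᵥ x₀ = 1 := hx₀S
    rw [h] at this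
    simp at this
  have hα : 0 < f x₀ := by
    have := hP.dotProduct_mulVec_pos hx₀ne
    rwa [hstar] at this
  refine ⟨f x₀, hα, fun x => ?_⟩
  rcases eq_or_ne x 0 with rfl | hx
  · simp
  · have hxx : 0 < x ⬝ᵥ x := lt_of_le_of_ne (dotSelf_nonneg x) (by
      intro h; exact hx (dotProduct_self_eq_zero.mp h.symm))
    set c : ℝ := Real.sqrt (x ⬝ᵥ x) with hc
    have hcpos : 0 < c := Real.sqrt_pos.mpr hxx
    have hc2 : c ^ 2 = x ⬝ᵥ x := Real.sq_sqrt hxx.le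
    have hu : (c⁻¹ • x) ∈ S := by
      have : (c⁻¹ • x) ⬝ᵥ (c⁻¹ • x) = c⁻¹ * (c⁻¹ * (x ⬝ᵥ x)) := by
        rw [smul_dotProduct, dotProduct_smul]; simp [smul_eq_mul]
      show (c⁻¹ • x) ⬝ᵥ (c⁻¹ • x) = 1
      rw [this, ← hc2]
      field_simp
    have hfu : f (c⁻¹ • x) = c⁻¹ * (c⁻¹ * f x) := by
      simp only [hf, smul_dotProduct, Matrix.mulVec_smul, dotProduct_smul, smul_eq_mul]
    have := hmin _ hu
    rw [hfu] at this
    have h2 : f x₀ * c ^ 2 ≤ f x := by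
      rw [pow_two]
      calc f x₀ * (c * c) ≤ (c⁻¹ * (c⁻¹ * f x)) * (c * c) := by
            nlinarith [mul_pos hcpos hcpos]
        _ = f x := by field_simp
    rw [← hc2]
    linarith [h2]

private lemma inv_quad_le {m : ℕ} {A : Matrix (Fin m) (Fin m) ℝ} (hA : A.PosDef)
    {α : ℝ} (hα : 0 < α) (hAl : ∀ x : Fin m → ℝ, α * (x ⬝ᵥ x) ≤ x ⬝ᵥ A *ᵥ x)
    (t : Fin m → ℝ) : t ⬝ᵥ A⁻¹ *ᵥ t ≤ (t ⬝ᵥ t) / α := by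
  set u : Fin m → ℝ := A⁻¹ *ᵥ t with hu
  have hAu : A *ᵥ u = t := by
    rw [hu, Matrix.mulVec_mulVec, Matrix.mul_nonsing_inv _ hA.det_pos.ne'.isUnit,
      Matrix.one_mulVec]
  have h1 : α * (u ⬝ᵥ u) ≤ u ⬝ᵥ t := by
    have := hAl u; rwa [hAu] at this
  have h2 : u ⬝ᵥ t ≤ Real.sqrt (u ⬝ᵥ u) * Real.sqrt (t ⬝ᵥ t) := dot_cauchy u t
  rw [dotProduct_comm]
  set a := Real.sqrt (u ⬝ᵥ u) with ha
  set b := Real.sqrt (t ⬝ᵥ t) with hb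
  have ha2 : a ^ 2 = u ⬝ᵥ u := Real.sq_sqrt (dotSelf_nonneg u)
  have hb2 : b ^ 2 = t ⬝ᵥ t := Real.sq_sqrt (dotSelf_nonneg t)
  have han : 0 ≤ a := Real.sqrt_nonneg _
  have hbn : 0 ≤ b := Real.sqrt_nonneg _
  rcases eq_or_lt_of_le han with h0 | hapos
  · have : u ⬝ᵥ u = 0 := by rw [← ha2, ← h0]; ring
    have hu0 : u = 0 := dotProduct_self_eq_zero.mp this
    rw [hu0]
    simp only [zero_dotProduct]
    exact div_nonneg (dotSelf_nonneg t) hα.le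
  · have hba : α * a ≤ b := by
      have : α * a * a ≤ b * a := by nlinarith
      exact le_of_mul_le_mul_right (by linarith [this]) hapos
    rw [le_div_iff₀ hα]
    nlinarith

/-- The WoLF posterior covariance `Σ(y') = (Σ₀⁻¹ + W(y')² Hᵀ R⁻¹ H)⁻¹`. -/
noncomputable def wolfCov {d m : ℕ} (H : Matrix (Fin d) (Fin m) ℝ)
    (R : Matrix (Fin d) (Fin d) ℝ) (S0 : Matrix (Fin m) (Fin m) ℝ)
    (W : (Fin d → ℝ) → ℝ) (y' : Fin d → ℝ) : Matrix (Fin m) (Fin m) ℝ :=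
  (S0⁻¹ + (W y' ^ 2) • (Hᵀ * R⁻¹ * H))⁻¹

/-- The WoLF posterior mean `μ(y') = μ₀ + W(y')² Σ(y') Hᵀ R⁻¹ (y' − yhat)` with `yhat = Hμ₀`. -/
noncomputable def wolfMean {d m : ℕ} (H : Matrix (Fin d) (Fin m) ℝ)
    (R : Matrix (Fin d) (Fin d) ℝ) (S0 : Matrix (Fin m) (Fin m) ℝ)
    (μ₀ : Fin m → ℝ) (W : (Fin d → ℝ) → ℝ) (y' : Fin d → ℝ) : Fin m → ℝ :=
  μ₀ + (W y' ^ 2) • (wolfCov H R S0 W y').mulVec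
    (Hᵀ.mulVec (R⁻¹.mulVec (y' - H.mulVec μ₀)))

/-- Bound on term (2) in the proof of Lemma D.2: the squared Mahalanobis norm of the mean
shift `(μ(y) − μ(y^c))ᵀ Σ(y^c)⁻¹ (μ(y) − μ(y^c))` is uniformly bounded over contaminations. -/
theorem wolf_mean_shift_term_bounded {d m : ℕ} (hd : 0 < d) (hm : 0 < m)
    (H : Matrix (Fin d) (Fin m) ℝ)
    (R : Matrix (Fin d) (Fin d) ℝ) (hR : R.PosDef)
    (S0 : Matrix (Fin m) (Fin m) ℝ) (hS0 : S0.PosDef)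
    (μ₀ : Fin m → ℝ)
    (W : (Fin d → ℝ) → ℝ) (C₂ C₇ : ℝ)
    (hW1 : ∀ y' : Fin d → ℝ, W y' ^ 2 ≤ C₂)
    (hW2 : ∀ y' : Fin d → ℝ, W y' ^ 2 * Real.sqrt (y' ⬝ᵥ y') ≤ C₇)
    (y : Fin d → ℝ) :
    ∃ C : ℝ, ∀ yc : Fin d → ℝ,
      (wolfMean H R S0 μ₀ W y - wolfMean H R S0 μ₀ W yc) ⬝ᵥ
        ((wolfCov H R S0 W yc)⁻¹).mulVec
          (wolfMean H R S0 μ₀ W y - wolfMean H R S0 μ₀ W yc) ≤ C := by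
  classical
  have hstar : ∀ k (x : Fin k → ℝ), star x = x := fun k x => funext fun i => rfl
  set M : Matrix (Fin m) (Fin m) ℝ := Hᵀ * R⁻¹ * H with hMdef
  have hMpsd : M.PosSemidef := by
    have h1 : (R⁻¹).PosSemidef := hR.inv.posSemidef
    have h2 := h1.conjTranspose_mul_mul_same H
    rw [Matrix.conjTranspose_eq_transpose_of_trivial] at h2
    exact h2
  set A : (Fin d → ℝ) → Matrix (Fin m) (Fin m) ℝ := fun y' => S0⁻¹ + (W y' ^ 2) • M
    with hAdef
  have hApos : ∀ y', (A y').PosDef := fun y' =>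
    hS0.inv.add_posSemidef (psd_smul hMpsd (sq_nonneg _))
  have hCovInv : ∀ y', (wolfCov H R S0 W y')⁻¹ = A y' := fun y' => by
    show (A y')⁻¹⁻¹ = A y'
    exact Matrix.nonsing_inv_nonsing_inv _ (hApos y').det_pos.ne'.isUnit
  set yhat : Fin d → ℝ := H *ᵥ μ₀ with hyhat
  set v : (Fin d → ℝ) → (Fin m → ℝ) := fun y' => Hᵀ *ᵥ (R⁻¹ *ᵥ (y' - yhat)) with hv
  have hMean : ∀ y', wolfMean H R S0 μ₀ W y'
      = μ₀ + (W y' ^ 2) • ((A y')⁻¹ *ᵥ v y') := fun y' => rfl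
  obtain ⟨α, hα, hαl⟩ := posdef_lower hm S0⁻¹ hS0.inv
  have hαA : ∀ y' (x : Fin m → ℝ), α * (x ⬝ᵥ x) ≤ x ⬝ᵥ (A y') *ᵥ x := by
    intro y' x
    have h2 : 0 ≤ x ⬝ᵥ ((W y' ^ 2) • M) *ᵥ x := by
      have := (psd_smul hMpsd (sq_nonneg (W y'))).dotProduct_mulVec_nonneg x
      rwa [hstar] at this
    have h3 : x ⬝ᵥ (A y') *ᵥ x
        = x ⬝ᵥ S0⁻¹ *ᵥ x + x ⬝ᵥ ((W y' ^ 2) • M) *ᵥ x := by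
      show x ⬝ᵥ (S0⁻¹ + (W y' ^ 2) • M) *ᵥ x = _
      rw [Matrix.add_mulVec, dotProduct_add]
    linarith [hαl x]
  set G : Matrix (Fin m) (Fin d) ℝ := Hᵀ * R⁻¹ with hG
  set F : ℝ := ∑ i, ∑ j, G i j ^ 2 with hF
  have hFnn : 0 ≤ F :=
    Finset.sum_nonneg fun _ _ => Finset.sum_nonneg fun _ _ => sq_nonneg _
  set Nyhat : ℝ := Real.sqrt (yhat ⬝ᵥ yhat) with hNyhat
  have hNyhatnn : 0 ≤ Nyhat := Real.sqrt_nonneg _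
  have hC₂ : 0 ≤ C₂ := le_trans (sq_nonneg (W y)) (hW1 y)
  set B : ℝ := C₇ + C₂ * Nyhat with hB
  set u : Fin m → ℝ := (W y ^ 2) • ((A y)⁻¹ *ᵥ v y) with hu
  set T1 : ℝ := u ⬝ᵥ S0⁻¹ *ᵥ u + C₂ * (u ⬝ᵥ M *ᵥ u) with hT1
  refine ⟨2 * T1 + 2 * (F * B ^ 2 / α), fun yc => ?_⟩
  set s : Fin m → ℝ := (W yc ^ 2) • ((A yc)⁻¹ *ᵥ v yc) with hs
  have hz : wolfMean H R S0 μ₀ W y - wolfMean H R S0 μ₀ W yc = u - s := by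
    rw [hMean y, hMean yc, ← hu, ← hs]
    abel
  rw [hz, hCovInv yc]
  show (u - s) ⬝ᵥ (A yc) *ᵥ (u - s) ≤ _
  have hq : ∀ x : Fin m → ℝ, 0 ≤ x ⬝ᵥ (A yc) *ᵥ x := fun x => by
    have := (hApos yc).posSemidef.dotProduct_mulVec_nonneg x
    rwa [hstar] at this
  have hexp : (u - s) ⬝ᵥ (A yc) *ᵥ (u - s) + (u + s) ⬝ᵥ (A yc) *ᵥ (u + s)
      = 2 * (u ⬝ᵥ (A yc) *ᵥ u) + 2 * (s ⬝ᵥ (A yc) *ᵥ s) := by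
    simp only [Matrix.mulVec_add, Matrix.mulVec_sub, sub_dotProduct, dotProduct_sub,
      add_dotProduct, dotProduct_add]
    ring
  have ht1 : u ⬝ᵥ (A yc) *ᵥ u ≤ T1 := by
    have hAu : u ⬝ᵥ (A yc) *ᵥ u
        = u ⬝ᵥ S0⁻¹ *ᵥ u + (W yc ^ 2) * (u ⬝ᵥ M *ᵥ u) := by
      show u ⬝ᵥ (S0⁻¹ + (W yc ^ 2) • M) *ᵥ u = _
      rw [Matrix.add_mulVec, dotProduct_add, Matrix.smul_mulVec, dotProduct_smul,
        smul_eq_mul]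
    have hMu : 0 ≤ u ⬝ᵥ M *ᵥ u := by
      have := hMpsd.dotProduct_mulVec_nonneg u; rwa [hstar] at this
    have := mul_le_mul_of_nonneg_right (hW1 yc) hMu
    rw [hAu, hT1]
    linarith
  set t : Fin m → ℝ := (W yc ^ 2) • v yc with ht
  have hst : s = (A yc)⁻¹ *ᵥ t := by rw [hs, ht, Matrix.mulVec_smul]
  have hqs : s ⬝ᵥ (A yc) *ᵥ s = t ⬝ᵥ (A yc)⁻¹ *ᵥ t := by
    rw [hst]
    have hAt : (A yc) *ᵥ ((A yc)⁻¹ *ᵥ t) = t := by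
      rw [Matrix.mulVec_mulVec, Matrix.mul_nonsing_inv _ (hApos yc).det_pos.ne'.isUnit,
        Matrix.one_mulVec]
    rw [hAt, dotProduct_comm]
  have htt : t ⬝ᵥ t ≤ F * B ^ 2 := by
    have htG : t = G *ᵥ ((W yc ^ 2) • (yc - yhat)) := by
      rw [ht, hv, hG, Matrix.mulVec_smul, ← Matrix.mulVec_mulVec]
    have h1 : t ⬝ᵥ t ≤ F * (((W yc ^ 2) • (yc - yhat)) ⬝ᵥ ((W yc ^ 2) • (yc - yhat))) := by
      rw [htG]; exact frobenius_bound G _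
    have h2 : ((W yc ^ 2) • (yc - yhat)) ⬝ᵥ ((W yc ^ 2) • (yc - yhat)) ≤ B ^ 2 := by
      rw [smul_dotProduct, dotProduct_smul, smul_eq_mul, smul_eq_mul, ← mul_assoc]
      have hsub := dot_sub_le yc yhat
      have haw : (0:ℝ) ≤ W yc ^ 2 := sq_nonneg _
      have hycnn : 0 ≤ Real.sqrt (yc ⬝ᵥ yc) := Real.sqrt_nonneg _
      have h4 : (W yc ^ 2) * (Real.sqrt (yc ⬝ᵥ yc) + Nyhat) ≤ B := by
        rw [hB, mul_add]
        exact add_le_add (hW2 yc) (mul_le_mul_of_nonneg_right (hW1 yc) hNyhatnn)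
      have h5 : 0 ≤ (W yc ^ 2) * (Real.sqrt (yc ⬝ᵥ yc) + Nyhat) :=
        mul_nonneg haw (add_nonneg hycnn hNyhatnn)
      have h3 : (W yc ^ 2) * (W yc ^ 2) * ((yc - yhat) ⬝ᵥ (yc - yhat))
          ≤ ((W yc ^ 2) * (Real.sqrt (yc ⬝ᵥ yc) + Nyhat)) ^ 2 := by
        have := mul_le_mul_of_nonneg_left hsub (mul_nonneg haw haw)
        calc (W yc ^ 2) * (W yc ^ 2) * ((yc - yhat) ⬝ᵥ (yc - yhat))
            ≤ (W yc ^ 2) * (W yc ^ 2) * ((Real.sqrt (yc ⬝ᵥ yc) + Nyhat) ^ 2) := this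
          _ = ((W yc ^ 2) * (Real.sqrt (yc ⬝ᵥ yc) + Nyhat)) ^ 2 := by ring
      calc (W yc ^ 2) * (W yc ^ 2) * ((yc - yhat) ⬝ᵥ (yc - yhat))
          ≤ ((W yc ^ 2) * (Real.sqrt (yc ⬝ᵥ yc) + Nyhat)) ^ 2 := h3
        _ ≤ B ^ 2 := by nlinarith [h4, h5]
    calc t ⬝ᵥ t ≤ F * (((W yc ^ 2) • (yc - yhat)) ⬝ᵥ ((W yc ^ 2) • (yc - yhat))) := h1
      _ ≤ F * B ^ 2 := mul_le_mul_of_nonneg_left h2 hFnn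
  have ht2 : s ⬝ᵥ (A yc) *ᵥ s ≤ F * B ^ 2 / α := by
    rw [hqs]
    calc t ⬝ᵥ (A yc)⁻¹ *ᵥ t ≤ (t ⬝ᵥ t) / α := inv_quad_le (hApos yc) hα (hαA yc) t
      _ ≤ F * B ^ 2 / α := by gcongr
  have hq2 := hq (u + s)
  set q1 := (u - s) ⬝ᵥ (A yc) *ᵥ (u - s) with hq1d
  set q2 := (u + s) ⬝ᵥ (A yc) *ᵥ (u + s) with hq2d
  set qu := u ⬝ᵥ (A yc) *ᵥ u with hqud
  set qs := s ⬝ᵥ (A yc) *ᵥ s with hqsd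
  clear_value q1 q2 qu qs T1
  linarith [hexp, ht1, ht2, hq2]
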